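/- If a vertex v of a finite simple graph G is adjacent to at least two leaves, then v is free, i.e., v is not contained in any minimal completely flooding cascade set of G. -/

import Mathlib

open scoped Classical
open Polynomial

/-- One step of the cascade sequence: add all vertices having at least two
neighbors in the current set. -/
noncomputable def floodStep {V : Type*} (G : SimpleGraph V) [Fintype V]
    (C : Finset V) : Finset V :=
  C ∪ Finset.univ.filter (fun x => 2 ≤ (C.filter (fun y => G.Adj x y)).card)

/-- `C` completely floods `G`: the cascade sequence stabilizes to all of `V`.
Since `floodStep` is inflationary, this is equivalent to some iterate being `univ`. -/
def Floods {V : Type*} (G : SimpleGraph V) [Fintype V] (C : Finset V) : Prop :=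
  ∃ k, (floodStep G)^[k] C = Finset.univ

/-- The flood polynomial of `G`. -/
noncomputable def floodPoly {V : Type*} (G : SimpleGraph V) [Fintype V] :
    Polynomial ℕ :=
  ∑ C ∈ Finset.univ.filter (fun C : Finset V => Floods G C), Polynomial.X ^ C.card

/-- The degree of a vertex. -/
noncomputable def deg {V : Type*} (G : SimpleGraph V) [Fintype V] (v : V) : ℕ :=
  (Finset.univ.filter (fun y => G.Adj v y)).card

theorem free_of_two_leaf_neighbors {V : Type*} [Fintype V] (G : SimpleGraph V)
    (v l₁ l₂ : V) (hne : l₁ ≠ l₂)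
    (ha₁ : G.Adj v l₁) (ha₂ : G.Adj v l₂)
    (hd₁ : deg G l₁ = 1) (hd₂ : deg G l₂ = 1) :
    ∀ C : Finset V, Floods G C → (∀ D ⊂ C, ¬ Floods G D) → v ∉ C := by
  have hmono : Monotone (floodStep G) := by
    intro A B h
    unfold floodStep
    refine Finset.union_subset_union h (Finset.monotone_filter_right _ ?_)
    intro x _ hx
    exact le_trans hx (Finset.card_le_card (Finset.filter_subset_filter _ h))
  have leaf_mem : ∀ l : V, deg G l ≤ 1 → ∀ C : Finset V, Floods G C → l ∈ C := by
    intro l hd C hC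
    by_contra h
    obtain ⟨k, hk⟩ := hC
    have key : ∀ n, l ∉ (floodStep G)^[n] C := by
      intro n
      induction n with
      | zero => exact h
      | succ m ih =>
        rw [Function.iterate_succ_apply']
        intro hmem
        set S := (floodStep G)^[m] C with hS
        unfold floodStep at hmem
        rcases Finset.mem_union.mp hmem with h1 | h2
        · exact ih h1
        · have h2' := (Finset.mem_filter.mp h2).2
          have hle : (S.filter (fun y => G.Adj l y)).card ≤ deg G l :=
            Finset.card_le_card (Finset.filter_subset_filter _ (Finset.subset_univ _))
          omega
    exact key k (hk ▸ Finset.mem_univ l)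
  intro C hC hmin hv
  have hl₁ : l₁ ∈ C := leaf_mem l₁ hd₁.le C hC
  have hl₂ : l₂ ∈ C := leaf_mem l₂ hd₂.le C hC
  set D := C.erase v with hD
  have hsub : C ⊆ floodStep G D := by
    intro x hx
    by_cases hxv : x = v
    · subst hxv
      unfold floodStep
      refine Finset.mem_union_right _ (Finset.mem_filter.mpr ⟨Finset.mem_univ _, ?_⟩)
      have h1 : l₁ ∈ D.filter (fun y => G.Adj x y) :=
        Finset.mem_filter.mpr ⟨Finset.mem_erase.mpr ⟨ha₁.ne', hl₁⟩, ha₁⟩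
      have h2 : l₂ ∈ D.filter (fun y => G.Adj x y) :=
        Finset.mem_filter.mpr ⟨Finset.mem_erase.mpr ⟨ha₂.ne', hl₂⟩, ha₂⟩
      exact Finset.one_lt_card.mpr ⟨l₁, h1, l₂, h2, hne⟩
    · exact Finset.mem_union_left _ (Finset.mem_erase.mpr ⟨hxv, hx⟩)
  obtain ⟨k, hk⟩ := hC
  have hfl : Floods G D := by
    refine ⟨k + 1, ?_⟩
    have : (floodStep G)^[k] C ⊆ (floodStep G)^[k + 1] D := by
      rw [Function.iterate_succ_apply]
      exact hmono.iterate k hsub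
    rw [hk] at this
    exact Finset.univ_subset_iff.mp this
  exact hmin D (Finset.erase_ssubset hv) hfl
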